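/- (Generalized performance-difference lemma.) For any function f : S×A → ℝ and any policies π, π' : S → Δ(A), J(π') − J(π) = (1/(1−γ)) · ( E_{s~d^{π'}}[f(s,π') − f(s,π)] + E_{(s,a)~d^{π'}}[(T^π f)(s,a) − f(s,a)] + E_{(s,a)~d^{π}}[f(s,a) − (T^π f)(s,a)] ), where in the first term s is drawn from the state marginal of d^{π'}. -/

import Mathlib

open scoped BigOperators

noncomputable section

/-- The policy-specific Bellman operator:
`(T^π f)(s,a) = R(s,a) + γ E_{s' ~ P(·|s,a)}[f(s',π)]`. -/
def bellmanOp {S A : Type*} [Fintype S] [Fintype A] (P : S → A → S → ℝ)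
    (R : S → A → ℝ) (γ : ℝ) (pol : S → A → ℝ) (f : S → A → ℝ) : S → A → ℝ :=
  fun s a => R s a + γ * ∑ s', P s a s' * ∑ a', pol s' a' * f s' a'

/-- `occt P pol d0 t s a = Pr_π[s_t = s, a_t = a]`, the time-`t` state-action
distribution of the stationary policy `pol` started from `d0`. -/
def occt {S A : Type*} [Fintype S] [Fintype A] (P : S → A → S → ℝ)
    (pol : S → A → ℝ) (d0 : S → ℝ) : ℕ → S → A → ℝ
  | 0 => fun s a => d0 s * pol s a
  | (t + 1) => fun s' a' => (∑ s, ∑ a, occt P pol d0 t s a * P s a s') * pol s' a'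

/-- Discounted state-action occupancy `d^π = (1-γ) Σ_t γ^t d_t^π`. -/
def docc {S A : Type*} [Fintype S] [Fintype A] (P : S → A → S → ℝ)
    (pol : S → A → ℝ) (d0 : S → ℝ) (γ : ℝ) (s : S) (a : A) : ℝ :=
  (1 - γ) * ∑' t : ℕ, γ ^ t * occt P pol d0 t s a

/-- Expected discounted return `J(π) = E_π[Σ_t γ^t r_t]`. -/
def Jret {S A : Type*} [Fintype S] [Fintype A] (P : S → A → S → ℝ)
    (R : S → A → ℝ) (γ : ℝ) (pol : S → A → ℝ) (d0 : S → ℝ) : ℝ :=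
  ∑' t : ℕ, γ ^ t * ∑ s, ∑ a, occt P pol d0 t s a * R s a

/-- `J_f(π) = E_{s ~ d0}[f(s,π)]`. -/
def Jf {S A : Type*} [Fintype S] [Fintype A] (d0 : S → ℝ) (pol : S → A → ℝ)
    (f : S → A → ℝ) : ℝ :=
  ∑ s, d0 s * ∑ a, pol s a * f s a

section AuxPD

variable {S A : Type*} [Fintype S] [Fintype A]

/-- Summability of a finite sum of summable sequences. -/
lemma summable_finset_sum_aux {ι : Type*} (s : Finset ι) (h : ι → ℕ → ℝ)
    (hs : ∀ i ∈ s, Summable (h i)) : Summable (fun t => ∑ i ∈ s, h i t) := by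
  classical
  induction s using Finset.induction with
  | empty => simpa using summable_zero
  | @insert x s hx ih =>
      simp only [Finset.sum_insert hx]
      exact (hs x (Finset.mem_insert_self x s)).add
        (ih fun i hi => hs i (Finset.mem_insert_of_mem hi))

lemma summable_geo_mul {γ : ℝ} (hγ0 : 0 ≤ γ) (hγ1 : γ < 1) (u : ℕ → ℝ) (C : ℝ)
    (hu : ∀ t, |u t| ≤ C) : Summable (fun t => γ ^ t * u t) := by
  refine Summable.of_norm_bounded
    ((summable_geometric_of_lt_one hγ0 hγ1).mul_left C) (fun t => ?_)
  have h1 : ‖γ ^ t * u t‖ = γ ^ t * |u t| := by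
    rw [norm_mul, Real.norm_eq_abs, Real.norm_eq_abs, abs_pow, abs_of_nonneg hγ0]
  calc ‖γ ^ t * u t‖ = γ ^ t * |u t| := h1
    _ ≤ γ ^ t * C := mul_le_mul_of_nonneg_left (hu t) (pow_nonneg hγ0 t)
    _ = C * γ ^ t := mul_comm _ _

variable (P : S → A → S → ℝ) (pol : S → A → ℝ) (d0 : S → ℝ)

lemma occt_nonneg (hP0 : ∀ s a s', 0 ≤ P s a s') (hd00 : ∀ s, 0 ≤ d0 s)
    (hpol0 : ∀ s a, 0 ≤ pol s a) : ∀ t s a, 0 ≤ occt P pol d0 t s a := by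
  intro t
  induction t with
  | zero => intro s a; exact mul_nonneg (hd00 s) (hpol0 s a)
  | succ t ih =>
      intro s' a'
      exact mul_nonneg (Finset.sum_nonneg fun s _ => Finset.sum_nonneg fun a _ =>
        mul_nonneg (ih s a) (hP0 s a s')) (hpol0 s' a')

/-- Marginal recursion: `∑_{a'} occ_{t+1}(s',a') = ∑_{s,a} occ_t(s,a) P(s'|s,a)`. -/
lemma occt_succ_marg (hpol1 : ∀ s, ∑ a, pol s a = 1) (t : ℕ) (s' : S) :
    ∑ a', occt P pol d0 (t + 1) s' a' = ∑ s, ∑ a, occt P pol d0 t s a * P s a s' := by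
  simp only [occt]
  rw [← Finset.mul_sum, hpol1, mul_one]

/-- Row factorization: each row of `occ_t` is proportional to the policy. -/
lemma occt_row (hpol1 : ∀ s, ∑ a, pol s a = 1) (g : S → A → ℝ) (t : ℕ) (s : S) :
    ∑ a, occt P pol d0 t s a * g s a
      = (∑ a, occt P pol d0 t s a) * ∑ a, pol s a * g s a := by
  have key : ∀ c : ℝ, (∑ a, (c * pol s a) * g s a)
      = (∑ a, c * pol s a) * ∑ a, pol s a * g s a := by
    intro c
    rw [← Finset.mul_sum, hpol1, mul_one, Finset.mul_sum]
    exact Finset.sum_congr rfl fun a _ => by ring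
  cases t with
  | zero => exact key (d0 s)
  | succ t => exact key _

/-- Interchange of sums for the one-step expectation. -/
lemma occt_next (g : S → ℝ) (t : ℕ) :
    ∑ s, ∑ a, occt P pol d0 t s a * ∑ s', P s a s' * g s'
      = ∑ s', (∑ s, ∑ a, occt P pol d0 t s a * P s a s') * g s' := by
  calc ∑ s, ∑ a, occt P pol d0 t s a * ∑ s', P s a s' * g s'
      = ∑ s, ∑ a, ∑ s', occt P pol d0 t s a * (P s a s' * g s') :=
        Finset.sum_congr rfl fun s _ => Finset.sum_congr rfl fun a _ =>
          Finset.mul_sum _ _ _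
    _ = ∑ s, ∑ s', ∑ a, occt P pol d0 t s a * (P s a s' * g s') :=
        Finset.sum_congr rfl fun s _ => Finset.sum_comm
    _ = ∑ s', ∑ s, ∑ a, occt P pol d0 t s a * (P s a s' * g s') := Finset.sum_comm
    _ = ∑ s', (∑ s, ∑ a, occt P pol d0 t s a * P s a s') * g s' := by
        refine Finset.sum_congr rfl fun s' _ => ?_
        rw [Finset.sum_mul]
        refine Finset.sum_congr rfl fun s _ => ?_
        rw [Finset.sum_mul]
        exact Finset.sum_congr rfl fun a _ => (mul_assoc _ _ _).symm

lemma occt_sum_one (hP1 : ∀ s a, ∑ s', P s a s' = 1) (hd01 : ∑ s, d0 s = 1)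
    (hpol1 : ∀ s, ∑ a, pol s a = 1) : ∀ t, ∑ s, ∑ a, occt P pol d0 t s a = 1 := by
  intro t
  induction t with
  | zero =>
      simp only [occt, ← Finset.mul_sum, hpol1, mul_one]
      exact hd01
  | succ t ih =>
      have h1 : ∀ s', ∑ a', occt P pol d0 (t + 1) s' a'
          = ∑ s, ∑ a, occt P pol d0 t s a * P s a s' := occt_succ_marg P pol d0 hpol1 t
      calc ∑ s', ∑ a', occt P pol d0 (t + 1) s' a'
          = ∑ s', (∑ s, ∑ a, occt P pol d0 t s a * P s a s') * (1 : ℝ) := by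
            simp only [mul_one]; exact Finset.sum_congr rfl fun s' _ => h1 s'
        _ = ∑ s, ∑ a, occt P pol d0 t s a * ∑ s', P s a s' * (1 : ℝ) :=
            (occt_next P pol d0 (fun _ => 1) t).symm
        _ = 1 := by simp only [mul_one, hP1]; exact ih

lemma occt_le_one (hP0 : ∀ s a s', 0 ≤ P s a s') (hP1 : ∀ s a, ∑ s', P s a s' = 1)
    (hd00 : ∀ s, 0 ≤ d0 s) (hd01 : ∑ s, d0 s = 1)
    (hpol0 : ∀ s a, 0 ≤ pol s a) (hpol1 : ∀ s, ∑ a, pol s a = 1)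
    (t : ℕ) (s : S) (a : A) : occt P pol d0 t s a ≤ 1 := by
  have hnn := occt_nonneg P pol d0 hP0 hd00 hpol0
  calc occt P pol d0 t s a ≤ ∑ a, occt P pol d0 t s a :=
        Finset.single_le_sum (fun a _ => hnn t s a) (Finset.mem_univ a)
    _ ≤ ∑ s, ∑ a, occt P pol d0 t s a :=
        Finset.single_le_sum
          (fun s _ => Finset.sum_nonneg fun a _ => hnn t s a) (Finset.mem_univ s)
    _ = 1 := occt_sum_one P pol d0 hP1 hd01 hpol1 t

lemma occt_pair_bound (hP0 : ∀ s a s', 0 ≤ P s a s') (hP1 : ∀ s a, ∑ s', P s a s' = 1)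
    (hd00 : ∀ s, 0 ≤ d0 s) (hd01 : ∑ s, d0 s = 1)
    (hpol0 : ∀ s a, 0 ≤ pol s a) (hpol1 : ∀ s, ∑ a, pol s a = 1)
    (g : S → A → ℝ) (t : ℕ) :
    |∑ s, ∑ a, occt P pol d0 t s a * g s a| ≤ ∑ s, ∑ a, |g s a| := by
  have hnn := occt_nonneg P pol d0 hP0 hd00 hpol0
  have hle := occt_le_one P pol d0 hP0 hP1 hd00 hd01 hpol0 hpol1
  calc |∑ s, ∑ a, occt P pol d0 t s a * g s a|
      ≤ ∑ s, |∑ a, occt P pol d0 t s a * g s a| := Finset.abs_sum_le_sum_abs _ _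
    _ ≤ ∑ s, ∑ a, |occt P pol d0 t s a * g s a| :=
        Finset.sum_le_sum fun s _ => Finset.abs_sum_le_sum_abs _ _
    _ ≤ ∑ s, ∑ a, |g s a| := by
        refine Finset.sum_le_sum fun s _ => Finset.sum_le_sum fun a _ => ?_
        rw [abs_mul, abs_of_nonneg (hnn t s a)]
        calc occt P pol d0 t s a * |g s a| ≤ 1 * |g s a| :=
              mul_le_mul_of_nonneg_right (hle t s a) (abs_nonneg _)
          _ = |g s a| := one_mul _

/-- The key interchange: occupancy expectation as discounted sum of time-`t` ones. -/
lemma docc_pair (γ : ℝ) (hγ0 : 0 ≤ γ) (hγ1 : γ < 1)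
    (hP0 : ∀ s a s', 0 ≤ P s a s') (hP1 : ∀ s a, ∑ s', P s a s' = 1)
    (hd00 : ∀ s, 0 ≤ d0 s) (hd01 : ∑ s, d0 s = 1)
    (hpol0 : ∀ s a, 0 ≤ pol s a) (hpol1 : ∀ s, ∑ a, pol s a = 1)
    (g : S → A → ℝ) :
    ∑ s, ∑ a, docc P pol d0 γ s a * g s a
      = (1 - γ) * ∑' t : ℕ, γ ^ t * ∑ s, ∑ a, occt P pol d0 t s a * g s a := by
  have hnn := occt_nonneg P pol d0 hP0 hd00 hpol0
  have hle := occt_le_one P pol d0 hP0 hP1 hd00 hd01 hpol0 hpol1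
  have hsum : ∀ s a, Summable (fun t => γ ^ t * (occt P pol d0 t s a * g s a)) := by
    intro s a
    refine summable_geo_mul hγ0 hγ1 _ |g s a| (fun t => ?_)
    rw [abs_mul, abs_of_nonneg (hnn t s a)]
    calc occt P pol d0 t s a * |g s a| ≤ 1 * |g s a| :=
          mul_le_mul_of_nonneg_right (hle t s a) (abs_nonneg _)
      _ = |g s a| := one_mul _
  have step1 : ∀ s a, docc P pol d0 γ s a * g s a
      = (1 - γ) * ∑' t : ℕ, γ ^ t * (occt P pol d0 t s a * g s a) := by
    intro s a
    rw [docc, mul_assoc, ← tsum_mul_right]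
    congr 1
    exact tsum_congr fun t => by ring
  calc ∑ s, ∑ a, docc P pol d0 γ s a * g s a
      = ∑ s, ∑ a, (1 - γ) * ∑' t : ℕ, γ ^ t * (occt P pol d0 t s a * g s a) := by
        exact Finset.sum_congr rfl fun s _ => Finset.sum_congr rfl fun a _ => step1 s a
    _ = (1 - γ) * ∑ s, ∑ a, ∑' t : ℕ, γ ^ t * (occt P pol d0 t s a * g s a) := by
        rw [Finset.mul_sum]
        exact Finset.sum_congr rfl fun s _ => (Finset.mul_sum _ _ _).symm
    _ = (1 - γ) * ∑ s, ∑' t : ℕ, ∑ a, γ ^ t * (occt P pol d0 t s a * g s a) := by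
        congr 1
        exact Finset.sum_congr rfl fun s _ => (Summable.tsum_finsetSum fun a _ => hsum s a).symm
    _ = (1 - γ) * ∑' t : ℕ, ∑ s, ∑ a, γ ^ t * (occt P pol d0 t s a * g s a) := by
        congr 1
        exact (Summable.tsum_finsetSum fun s _ =>
          summable_finset_sum_aux _ _ fun a _ => hsum s a).symm
    _ = (1 - γ) * ∑' t : ℕ, γ ^ t * ∑ s, ∑ a, occt P pol d0 t s a * g s a := by
        congr 1
        refine tsum_congr fun t => ?_
        rw [Finset.mul_sum]
        exact Finset.sum_congr rfl fun s _ => (Finset.mul_sum _ _ _).symm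

end AuxPD

set_option maxHeartbeats 1000000 in
/-- **Generalized performance-difference lemma.** For any `f : S×A → ℝ` and policies
`π, π'`:  `J(π') − J(π) = (1/(1−γ)) ( E_{s~d^{π'}}[f(s,π') − f(s,π)]
+ E_{d^{π'}}[T^π f − f] + E_{d^π}[f − T^π f] )`, where in the first term `s` is drawn
from the state marginal of `d^{π'}`. -/
theorem generalized_performance_difference {S A : Type*} [Fintype S] [Fintype A]
    (P : S → A → S → ℝ) (R : S → A → ℝ) (Rmax γ : ℝ) (d0 : S → ℝ)
    (pol pol' : S → A → ℝ)
    (hP0 : ∀ s a s', 0 ≤ P s a s') (hP1 : ∀ s a, ∑ s', P s a s' = 1)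
    (hR : ∀ s a, 0 ≤ R s a ∧ R s a ≤ Rmax)
    (hγ0 : 0 ≤ γ) (hγ1 : γ < 1)
    (hd00 : ∀ s, 0 ≤ d0 s) (hd01 : ∑ s, d0 s = 1)
    (hpol0 : ∀ s a, 0 ≤ pol s a) (hpol1 : ∀ s, ∑ a, pol s a = 1)
    (hpol'0 : ∀ s a, 0 ≤ pol' s a) (hpol'1 : ∀ s, ∑ a, pol' s a = 1)
    (f : S → A → ℝ) :
    Jret P R γ pol' d0 - Jret P R γ pol d0 =
      (1 / (1 - γ)) *
        ((∑ s, (∑ a, docc P pol' d0 γ s a) *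
            ((∑ a, pol' s a * f s a) - (∑ a, pol s a * f s a)))
          + (∑ s, ∑ a, docc P pol' d0 γ s a * (bellmanOp P R γ pol f s a - f s a))
          + (∑ s, ∑ a, docc P pol d0 γ s a * (f s a - bellmanOp P R γ pol f s a))) := by
  have hγne : (1 : ℝ) - γ ≠ 0 := by linarith
  -- notation
  set Fp : S → ℝ := fun s => ∑ a, pol s a * f s a with hFp
  set Fp' : S → ℝ := fun s => ∑ a, pol' s a * f s a with hFp'
  -- the three per-time-step quantities
  set u1 : ℕ → ℝ := fun t => ∑ s, ∑ a, occt P pol' d0 t s a * (Fp' s - Fp s) with hu1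
  set u2 : ℕ → ℝ :=
    fun t => ∑ s, ∑ a, occt P pol' d0 t s a * (bellmanOp P R γ pol f s a - f s a) with hu2
  set u3 : ℕ → ℝ :=
    fun t => ∑ s, ∑ a, occt P pol d0 t s a * (f s a - bellmanOp P R γ pol f s a) with hu3
  set r' : ℕ → ℝ := fun t => ∑ s, ∑ a, occt P pol' d0 t s a * R s a with hr'
  set r : ℕ → ℝ := fun t => ∑ s, ∑ a, occt P pol d0 t s a * R s a with hr
  set w' : ℕ → ℝ := fun t => ∑ s, (∑ a, occt P pol' d0 t s a) * Fp s with hw'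
  set w : ℕ → ℝ := fun t => ∑ s, (∑ a, occt P pol d0 t s a) * Fp s with hw
  -- rewrite the three occupancy expectations via docc_pair
  have hT1 : (∑ s, (∑ a, docc P pol' d0 γ s a) *
        ((∑ a, pol' s a * f s a) - (∑ a, pol s a * f s a)))
      = (1 - γ) * ∑' t : ℕ, γ ^ t * u1 t := by
    have h := docc_pair P pol' d0 γ hγ0 hγ1 hP0 hP1 hd00 hd01 hpol'0 hpol'1
      (fun s _ => (∑ a, pol' s a * f s a) - (∑ a, pol s a * f s a))
    calc (∑ s, (∑ a, docc P pol' d0 γ s a) *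
          ((∑ a, pol' s a * f s a) - (∑ a, pol s a * f s a)))
        = ∑ s, ∑ a, docc P pol' d0 γ s a *
            ((∑ a, pol' s a * f s a) - (∑ a, pol s a * f s a)) :=
          Finset.sum_congr rfl fun s _ => Finset.sum_mul _ _ _
      _ = (1 - γ) * ∑' t : ℕ, γ ^ t * u1 t := h
  have hT2 : (∑ s, ∑ a, docc P pol' d0 γ s a * (bellmanOp P R γ pol f s a - f s a))
      = (1 - γ) * ∑' t : ℕ, γ ^ t * u2 t :=
    docc_pair P pol' d0 γ hγ0 hγ1 hP0 hP1 hd00 hd01 hpol'0 hpol'1 _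
  have hT3 : (∑ s, ∑ a, docc P pol d0 γ s a * (f s a - bellmanOp P R γ pol f s a))
      = (1 - γ) * ∑' t : ℕ, γ ^ t * u3 t :=
    docc_pair P pol d0 γ hγ0 hγ1 hP0 hP1 hd00 hd01 hpol0 hpol1 _
  -- summability facts
  have hbd' := occt_pair_bound P pol' d0 hP0 hP1 hd00 hd01 hpol'0 hpol'1
  have hbd := occt_pair_bound P pol d0 hP0 hP1 hd00 hd01 hpol0 hpol1
  have hSu1 : Summable (fun t => γ ^ t * u1 t) :=
    summable_geo_mul hγ0 hγ1 _ _ (hbd' (fun s _ => Fp' s - Fp s))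
  have hSu2 : Summable (fun t => γ ^ t * u2 t) :=
    summable_geo_mul hγ0 hγ1 _ _ (hbd' (fun s a => bellmanOp P R γ pol f s a - f s a))
  have hSu3 : Summable (fun t => γ ^ t * u3 t) :=
    summable_geo_mul hγ0 hγ1 _ _ (hbd (fun s a => f s a - bellmanOp P R γ pol f s a))
  have hSr' : Summable (fun t => γ ^ t * r' t) :=
    summable_geo_mul hγ0 hγ1 _ _ (hbd' R)
  have hSr : Summable (fun t => γ ^ t * r t) :=
    summable_geo_mul hγ0 hγ1 _ _ (hbd R)
  have hwpair' : ∀ t, w' t = ∑ s, ∑ a, occt P pol' d0 t s a * Fp s := by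
    intro t
    exact Finset.sum_congr rfl fun s _ => Finset.sum_mul _ _ _
  have hwpair : ∀ t, w t = ∑ s, ∑ a, occt P pol d0 t s a * Fp s := by
    intro t
    exact Finset.sum_congr rfl fun s _ => Finset.sum_mul _ _ _
  have hSw' : Summable (fun t => γ ^ t * w' t) := by
    refine summable_geo_mul hγ0 hγ1 _ (∑ s, ∑ _a : A, |Fp s|) (fun t => ?_)
    rw [hwpair' t]; exact hbd' (fun s _ => Fp s) t
  have hSw : Summable (fun t => γ ^ t * w t) := by
    refine summable_geo_mul hγ0 hγ1 _ (∑ s, ∑ _a : A, |Fp s|) (fun t => ?_)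
    rw [hwpair t]; exact hbd (fun s _ => Fp s) t
  -- per-step identities
  -- (I) u1 t + u2 t = r' t + γ * w' (t+1) - w' t
  have hI : ∀ t, u1 t + u2 t = r' t + γ * w' (t + 1) - w' t := by
    intro t
    -- u1 t = (∑ s, (∑ a, occ') * Fp' s) - w' t
    have h1 : u1 t = (∑ s, (∑ a, occt P pol' d0 t s a) * Fp' s) - w' t := by
      simp only [hu1, hw', ← Finset.sum_sub_distrib]
      refine Finset.sum_congr rfl fun s _ => ?_
      rw [← mul_sub, ← Finset.sum_mul]
    -- u2 t = r' t + γ * w'(t+1) - (∑ s, (∑ a, occ') * Fp' s)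
    have h2 : u2 t = r' t + γ * w' (t + 1)
        - (∑ s, (∑ a, occt P pol' d0 t s a) * Fp' s) := by
      have eB : (∑ s, ∑ a, occt P pol' d0 t s a * ∑ s', P s a s' * Fp s')
          = w' (t + 1) := by
        rw [occt_next P pol' d0 Fp t]
        simp only [hw']
        refine Finset.sum_congr rfl fun s' _ => ?_
        rw [occt_succ_marg P pol' d0 hpol'1 t s']
      have eC : (∑ s, ∑ a, occt P pol' d0 t s a * f s a)
          = ∑ s, (∑ a, occt P pol' d0 t s a) * Fp' s := by
        refine Finset.sum_congr rfl fun s _ => ?_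
        rw [occt_row P pol' d0 hpol'1 f t s]
      have expand : ∀ s a, occt P pol' d0 t s a * (bellmanOp P R γ pol f s a - f s a)
          = occt P pol' d0 t s a * R s a
            + γ * (occt P pol' d0 t s a * ∑ s', P s a s' * Fp s')
            - occt P pol' d0 t s a * f s a := by
        intro s a
        simp only [bellmanOp, hFp]
        ring
      have e1 : ∑ s, ∑ a, occt P pol' d0 t s a * (bellmanOp P R γ pol f s a - f s a)
          = (∑ s, ∑ a, occt P pol' d0 t s a * R s a)
            + γ * (∑ s, ∑ a, occt P pol' d0 t s a * ∑ s', P s a s' * Fp s')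
            - ∑ s, ∑ a, occt P pol' d0 t s a * f s a := by
        rw [Finset.mul_sum, ← Finset.sum_add_distrib, ← Finset.sum_sub_distrib]
        refine Finset.sum_congr rfl fun s _ => ?_
        rw [Finset.mul_sum, ← Finset.sum_add_distrib, ← Finset.sum_sub_distrib]
        exact Finset.sum_congr rfl fun a _ => expand s a
      simp only [hu2, hr']
      rw [e1, eB, eC]
    rw [h1, h2]; ring
  -- (II) u3 t = w t - r t - γ * w (t+1)
  have hII : ∀ t, u3 t = w t - r t - γ * w (t + 1) := by
    intro t
    have eB : (∑ s, ∑ a, occt P pol d0 t s a * ∑ s', P s a s' * Fp s')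
        = w (t + 1) := by
      rw [occt_next P pol d0 Fp t]
      simp only [hw]
      refine Finset.sum_congr rfl fun s' _ => ?_
      rw [occt_succ_marg P pol d0 hpol1 t s']
    have eC : (∑ s, ∑ a, occt P pol d0 t s a * f s a)
        = ∑ s, (∑ a, occt P pol d0 t s a) * Fp s := by
      refine Finset.sum_congr rfl fun s _ => ?_
      rw [occt_row P pol d0 hpol1 f t s]
    have expand : ∀ s a, occt P pol d0 t s a * (f s a - bellmanOp P R γ pol f s a)
        = occt P pol d0 t s a * f s a - occt P pol d0 t s a * R s a
          - γ * (occt P pol d0 t s a * ∑ s', P s a s' * Fp s') := by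
      intro s a
      simp only [bellmanOp, hFp]
      ring
    have e1 : ∑ s, ∑ a, occt P pol d0 t s a * (f s a - bellmanOp P R γ pol f s a)
        = (∑ s, ∑ a, occt P pol d0 t s a * f s a)
          - (∑ s, ∑ a, occt P pol d0 t s a * R s a)
          - γ * (∑ s, ∑ a, occt P pol d0 t s a * ∑ s', P s a s' * Fp s') := by
      rw [Finset.mul_sum, ← Finset.sum_sub_distrib, ← Finset.sum_sub_distrib]
      refine Finset.sum_congr rfl fun s _ => ?_
      rw [Finset.mul_sum, ← Finset.sum_sub_distrib, ← Finset.sum_sub_distrib]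
      exact Finset.sum_congr rfl fun a _ => expand s a
    simp only [hu3, hr]
    rw [e1, eB, eC]
  -- telescoping
  have hshift' : Summable (fun t => γ ^ (t + 1) * w' (t + 1)) :=
    (summable_nat_add_iff 1).2 hSw'
  have hshift : Summable (fun t => γ ^ (t + 1) * w (t + 1)) :=
    (summable_nat_add_iff 1).2 hSw
  have htel' : ∑' t : ℕ, (γ ^ (t + 1) * w' (t + 1) - γ ^ t * w' t) = -(w' 0) := by
    rw [Summable.tsum_sub hshift' hSw']
    have := Summable.tsum_eq_zero_add hSw'
    rw [show (∑' t : ℕ, γ ^ (t + 1) * w' (t + 1))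
        = ∑' t : ℕ, γ ^ t * w' t - γ ^ 0 * w' 0 from by rw [this]; ring]
    ring_nf
  have htel : ∑' t : ℕ, (γ ^ (t + 1) * w (t + 1) - γ ^ t * w t) = -(w 0) := by
    rw [Summable.tsum_sub hshift hSw]
    have := Summable.tsum_eq_zero_add hSw
    rw [show (∑' t : ℕ, γ ^ (t + 1) * w (t + 1))
        = ∑' t : ℕ, γ ^ t * w t - γ ^ 0 * w 0 from by rw [this]; ring]
    ring_nf
  have hw0 : w' 0 = w 0 := by
    rw [hw', hw]
    refine Finset.sum_congr rfl fun s _ => ?_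
    congr 1
    simp only [occt, ← Finset.mul_sum, hpol'1, hpol1, mul_one]
  -- combine the tsums
  have hmain : (∑' t : ℕ, γ ^ t * u1 t) + (∑' t : ℕ, γ ^ t * u2 t)
      + (∑' t : ℕ, γ ^ t * u3 t) = Jret P R γ pol' d0 - Jret P R γ pol d0 := by
    have hcomb : ∀ t : ℕ, γ ^ t * u1 t + γ ^ t * u2 t + γ ^ t * u3 t
        = (γ ^ t * r' t - γ ^ t * r t)
          + (γ ^ (t + 1) * w' (t + 1) - γ ^ t * w' t)
          - (γ ^ (t + 1) * w (t + 1) - γ ^ t * w t) := by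
      intro t
      have e1 : u1 t + u2 t = r' t + γ * w' (t + 1) - w' t := hI t
      have e2 : u3 t = w t - r t - γ * w (t + 1) := hII t
      have : γ ^ t * (u1 t + u2 t) + γ ^ t * u3 t
          = γ ^ t * (r' t + γ * w' (t + 1) - w' t)
            + γ ^ t * (w t - r t - γ * w (t + 1)) := by rw [e1, e2]
      calc γ ^ t * u1 t + γ ^ t * u2 t + γ ^ t * u3 t
          = γ ^ t * (u1 t + u2 t) + γ ^ t * u3 t := by ring
        _ = γ ^ t * (r' t + γ * w' (t + 1) - w' t)
            + γ ^ t * (w t - r t - γ * w (t + 1)) := this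
        _ = (γ ^ t * r' t - γ ^ t * r t)
            + (γ ^ (t + 1) * w' (t + 1) - γ ^ t * w' t)
            - (γ ^ (t + 1) * w (t + 1) - γ ^ t * w t) := by ring
    have hS12 : Summable (fun t => γ ^ t * u1 t + γ ^ t * u2 t) := hSu1.add hSu2
    have hS123 : Summable (fun t => γ ^ t * u1 t + γ ^ t * u2 t + γ ^ t * u3 t) :=
      hS12.add hSu3
    have hD' : Summable (fun t => γ ^ (t + 1) * w' (t + 1) - γ ^ t * w' t) :=
      hshift'.sub hSw'
    have hD : Summable (fun t => γ ^ (t + 1) * w (t + 1) - γ ^ t * w t) :=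
      hshift.sub hSw
    calc (∑' t : ℕ, γ ^ t * u1 t) + (∑' t : ℕ, γ ^ t * u2 t)
        + (∑' t : ℕ, γ ^ t * u3 t)
        = ∑' t : ℕ, (γ ^ t * u1 t + γ ^ t * u2 t + γ ^ t * u3 t) := by
          rw [Summable.tsum_add hS12 hSu3, Summable.tsum_add hSu1 hSu2]
      _ = ∑' t : ℕ, ((γ ^ t * r' t - γ ^ t * r t)
            + (γ ^ (t + 1) * w' (t + 1) - γ ^ t * w' t)
            - (γ ^ (t + 1) * w (t + 1) - γ ^ t * w t)) := tsum_congr hcomb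
      _ = (∑' t : ℕ, (γ ^ t * r' t - γ ^ t * r t))
            + (∑' t : ℕ, (γ ^ (t + 1) * w' (t + 1) - γ ^ t * w' t))
            - (∑' t : ℕ, (γ ^ (t + 1) * w (t + 1) - γ ^ t * w t)) := by
          rw [Summable.tsum_sub (((hSr'.sub hSr).add hD')) hD,
            Summable.tsum_add (hSr'.sub hSr) hD']
      _ = (Jret P R γ pol' d0 - Jret P R γ pol d0) + (-(w' 0)) - (-(w 0)) := by
          rw [Summable.tsum_sub hSr' hSr, htel', htel]
          rfl
      _ = Jret P R γ pol' d0 - Jret P R γ pol d0 := by rw [hw0]; ring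
  rw [hT1, hT2, hT3, ← hmain]
  field_simp
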